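/- The free product F * G of a finitely generated free monoid F of rank r and a finite group G is quasi-isometric to a free monoid of rank r|G|. -/

import Mathlib

open scoped ENNReal NNReal

def IsSemimetric {X : Type*} (d : X → X → ℝ≥0∞) : Prop :=
  (∀ x y, d x y = 0 ↔ x = y) ∧ ∀ x y z, d x z ≤ d x y + d y z

noncomputable def wordDist {M : Type*} [Monoid M] (S : Set M) (x y : M) : ℝ≥0∞ :=
  sInf {n : ℝ≥0∞ | ∃ w : List M, (∀ s ∈ w, s ∈ S) ∧ x * w.prod = y ∧ n = w.length}

noncomputable def setDist {X : Type*} (d : X → X → ℝ≥0∞) (A B : Set X) : ℝ≥0∞ :=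
  ⨅ a ∈ A, ⨅ b ∈ B, d a b

namespace Stmt18Aux

open FreeMonoid Monoid

/-! ### Generic `wordDist` lemmas -/

theorem wordDist_le {M : Type*} [Monoid M] (S : Set M) {x y : M} (w : List M)
    (hw : ∀ s ∈ w, s ∈ S) (hxy : x * w.prod = y) :
    wordDist S x y ≤ (w.length : ℝ≥0∞) :=
  sInf_le ⟨w, hw, hxy, rfl⟩

theorem wordDist_self_le_zero {M : Type*} [Monoid M] (S : Set M) (x : M) :
    wordDist S x x ≤ 0 := by
  simpa using wordDist_le S ([] : List M) (by simp) (by simp)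

theorem wordDist_attained {M : Type*} [Monoid M] (S : Set M) (x y : M)
    (h : wordDist S x y ≠ ⊤) :
    ∃ w : List M, (∀ s ∈ w, s ∈ S) ∧ x * w.prod = y ∧
      (w.length : ℝ≥0∞) = wordDist S x y := by
  set T : Set ℕ := {m : ℕ | ∃ w : List M, (∀ s ∈ w, s ∈ S) ∧ x * w.prod = y ∧ w.length = m}
    with hT
  have hTne : T.Nonempty := by
    have h' : {n : ℝ≥0∞ | ∃ w : List M, (∀ s ∈ w, s ∈ S) ∧ x * w.prod = y ∧
        n = w.length}.Nonempty := by
      by_contra he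
      rw [Set.not_nonempty_iff_eq_empty] at he
      exact h (by rw [wordDist, he, sInf_empty])
    obtain ⟨n, w, hw, hxy, rfl⟩ := h'
    exact ⟨w.length, w, hw, hxy, rfl⟩
  obtain ⟨w, hw, hxy, hlen⟩ := Nat.sInf_mem hTne
  refine ⟨w, hw, hxy, le_antisymm ?_ (wordDist_le S w hw hxy)⟩
  refine le_sInf ?_
  rintro b ⟨w', hw', hxy', rfl⟩
  have : sInf T ≤ w'.length := Nat.sInf_le ⟨w', hw', hxy', rfl⟩
  exact_mod_cast hlen ▸ Nat.cast_le.mpr this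

/-! ### Free monoid distance lemmas -/

theorem prod_map_of {β : Type*} (c : List β) :
    (c.map (FreeMonoid.of (α := β))).prod = FreeMonoid.ofList c := by
  induction c with
  | nil => rfl
  | cons b t ih => simp [FreeMonoid.ofList_cons, ih]

theorem freeDist_le {β : Type*} (l c : List β) :
    wordDist (Set.range (FreeMonoid.of (α := β))) (FreeMonoid.ofList l)
      (FreeMonoid.ofList (l ++ c)) ≤ (c.length : ℝ≥0∞) := by
  have := wordDist_le (Set.range (FreeMonoid.of (α := β))) (x := FreeMonoid.ofList l)
    (y := FreeMonoid.ofList (l ++ c)) (c.map FreeMonoid.of)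
    (by rintro s hs; obtain ⟨b, -, rfl⟩ := List.mem_map.mp hs; exact ⟨b, rfl⟩)
    (by rw [prod_map_of, ← FreeMonoid.ofList_append])
  simpa using this

theorem length_prod_of {β : Type*} (w : List (FreeMonoid β))
    (hw : ∀ s ∈ w, s ∈ Set.range (FreeMonoid.of (α := β))) :
    (FreeMonoid.toList w.prod).length = w.length := by
  induction w with
  | nil => rfl
  | cons s t ih =>
    obtain ⟨b, rfl⟩ := hw s List.mem_cons_self
    rw [List.prod_cons, FreeMonoid.toList_mul, List.length_append,
      ih fun s hs => hw s (List.mem_cons_of_mem _ hs), List.length_cons,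
      FreeMonoid.toList_of, List.length_singleton]
    omega

/-! ### The free product side -/

variable {r : ℕ} {G : Type*} [Group G]

local notation "M" => Monoid.Coprod (FreeMonoid (Fin r)) G
local notation "X" => List (G × Fin r) × G

def actG (h : G) : List (G × Fin r) × G → List (G × Fin r) × G
  | ([], g) => ([], h * g)
  | ((k, a) :: t, g) => ((h * k, a) :: t, g)

def endG : G →* Function.End (List (G × Fin r) × G) where
  toFun := actG
  map_one' := by
    funext s
    rcases s with ⟨_ | ⟨⟨k, a⟩, t⟩, g⟩ <;> simp [actG, Function.End.one_def]
  map_mul' a b := by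
    funext s
    rcases s with ⟨_ | ⟨⟨k, c⟩, t⟩, g⟩ <;>
      simp [actG, Function.End.mul_def, Function.comp, mul_assoc] <;> rfl

def actA (a : Fin r) : List (G × Fin r) × G → List (G × Fin r) × G :=
  fun s => ((1, a) :: s.1, s.2)

def endF : FreeMonoid (Fin r) →* Function.End (List (G × Fin r) × G) :=
  FreeMonoid.lift (fun a => (actA a : Function.End _))

noncomputable def Phi : Monoid.Coprod (FreeMonoid (Fin r)) G →*
    Function.End (List (G × Fin r) × G) :=
  Monoid.Coprod.lift endF endG

noncomputable def dec (x : M) : List (G × Fin r) × G := Phi x ([], 1)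

noncomputable def emb (s : List (G × Fin r) × G) : M :=
  (s.1.map (fun p => Coprod.inr p.1 * Coprod.inl (FreeMonoid.of p.2))).prod * Coprod.inr s.2

theorem Phi_inl_of (a : Fin r) (s : List (G × Fin r) × G) :
    Phi (Coprod.inl (FreeMonoid.of a) : M) s = actA a s := rfl

theorem Phi_inr (h : G) (s : List (G × Fin r) × G) :
    Phi (Coprod.inr h : M) s = actG h s := rfl

theorem emb_actA (a : Fin r) (s : List (G × Fin r) × G) :
    emb (actA a s) = Coprod.inl (FreeMonoid.of a) * emb s := by
  rcases s with ⟨l, g⟩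
  simp [emb, actA, mul_assoc]

theorem emb_actG (h : G) (s : List (G × Fin r) × G) :
    emb (actG h s) = Coprod.inr h * emb s := by
  rcases s with ⟨_ | ⟨⟨k, a⟩, t⟩, g⟩ <;>
    simp [emb, actG, mul_assoc, map_mul]

theorem emb_Phi (x : M) : ∀ s, emb (Phi x s) = x * emb s := by
  induction x using Monoid.Coprod.induction_on with
  | inl m =>
    induction m using FreeMonoid.recOn with
    | one => intro s; simp [map_one, Function.End.one_def]
    | of_mul a m ihm =>
      intro s
      rw [map_mul, map_mul, Function.End.mul_def]
      show emb (Phi (Coprod.inl (FreeMonoid.of a) : M) (Phi (Coprod.inl m : M) s)) = _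
      rw [Phi_inl_of, emb_actA, ihm, mul_assoc]
  | inr h => intro s; rw [Phi_inr]; exact emb_actG h s
  | mul x y ihx ihy =>
    intro s
    rw [map_mul, Function.End.mul_def]
    show emb (Phi x (Phi y s)) = _
    rw [ihx, ihy, mul_assoc]

theorem emb_dec (x : M) : emb (dec x) = x := by
  have := emb_Phi x ([], 1)
  simpa [dec, emb] using this

theorem Phi_prodlist (u : List (G × Fin r)) (s : List (G × Fin r) × G) :
    Phi ((u.map (fun p => Coprod.inr p.1 * Coprod.inl (FreeMonoid.of p.2))).prod : M) s =
      (u ++ s.1, s.2) := by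
  induction u generalizing s with
  | nil => simp [map_one, Function.End.one_def]
  | cons p t ih =>
    rcases p with ⟨k, a⟩
    rw [List.map_cons, List.prod_cons, map_mul, Function.End.mul_def]
    show Phi (Coprod.inr k * Coprod.inl (FreeMonoid.of a) : M)
      (Phi ((t.map _).prod : M) s) = _
    rw [ih, map_mul, Function.End.mul_def]
    show Phi (Coprod.inr k : M) (Phi (Coprod.inl (FreeMonoid.of a) : M) _) = _
    rw [Phi_inl_of, Phi_inr]
    simp [actA, actG]

theorem dec_emb (s : List (G × Fin r) × G) : dec (emb s) = s := by
  rcases s with ⟨u, g⟩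
  rw [dec, emb, map_mul, Function.End.mul_def]
  show Phi ((u.map _).prod : M) (Phi (Coprod.inr g : M) ([], 1)) = _
  rw [Phi_inr]
  show Phi ((u.map _).prod : M) ([], g * 1) = _
  rw [Phi_prodlist]
  simp

theorem emb_mul_inr (u : List (G × Fin r)) (g h : G) :
    emb (u, g) * Coprod.inr h = emb (u, g * h) := by
  simp [emb, mul_assoc, ← map_mul]

theorem emb_mul_inl_of (u : List (G × Fin r)) (g : G) (a : Fin r) :
    emb (u, g) * Coprod.inl (FreeMonoid.of a) = emb (u ++ [(g, a)], 1) := by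
  simp [emb, mul_assoc]

/-- The generating set of the free product. -/
def genS (r : ℕ) (G : Type*) [Group G] : Set (Monoid.Coprod (FreeMonoid (Fin r)) G) :=
  Set.range (fun a : Fin r => (Coprod.inl (FreeMonoid.of a) : Monoid.Coprod (FreeMonoid (Fin r)) G))
    ∪ Set.range (fun h : G => (Coprod.inr h : Monoid.Coprod (FreeMonoid (Fin r)) G))

theorem genS_finite [Finite G] : (genS r G).Finite :=
  (Set.finite_range _).union (Set.finite_range _)

theorem genS_closure : Submonoid.closure (genS r G) = ⊤ := by
  rw [eq_top_iff]
  rintro x -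
  induction x using Monoid.Coprod.induction_on with
  | inl m =>
    induction m using FreeMonoid.recOn with
    | one => simpa using one_mem (Submonoid.closure (genS r G))
    | of_mul a m ihm =>
      rw [map_mul]
      exact mul_mem (Submonoid.subset_closure (Or.inl ⟨a, rfl⟩)) ihm
  | inr h => exact Submonoid.subset_closure (Or.inr ⟨h, rfl⟩)
  | mul x y ihx ihy => exact mul_mem ihx ihy

theorem dec_mul_inr (x : M) (h : G) :
    dec (x * Coprod.inr h) = ((dec x).1, (dec x).2 * h) := by
  conv_lhs => rw [← emb_dec x]
  rw [show emb (dec x) = emb ((dec x).1, (dec x).2) by rfl, emb_mul_inr, dec_emb]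

theorem dec_mul_inl_of (x : M) (a : Fin r) :
    dec (x * Coprod.inl (FreeMonoid.of a)) = ((dec x).1 ++ [((dec x).2, a)], 1) := by
  conv_lhs => rw [← emb_dec x]
  rw [show emb (dec x) = emb ((dec x).1, (dec x).2) by rfl, emb_mul_inl_of, dec_emb]

theorem dec_word (w : List (Monoid.Coprod (FreeMonoid (Fin r)) G))
    (hw : ∀ s ∈ w, s ∈ genS r G) :
    ∀ x : M, ∃ t : List (G × Fin r),
      (dec (x * w.prod)).1 = (dec x).1 ++ t ∧ t.length ≤ w.length := by
  induction w with
  | nil => intro x; exact ⟨[], by simp, by simp⟩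
  | cons s w' ih =>
    intro x
    have hs := hw s List.mem_cons_self
    have hrest : ∀ s' ∈ w', s' ∈ genS r G := fun s' hs' => hw s' (List.mem_cons_of_mem _ hs')
    obtain ⟨t', ht', hlen'⟩ := ih hrest (x * s)
    rw [List.prod_cons, ← mul_assoc]
    rcases hs with ⟨a, rfl⟩ | ⟨h, rfl⟩
    · refine ⟨((dec x).2, a) :: t', ?_, by simpa using Nat.succ_le_succ hlen'⟩
      rw [ht', dec_mul_inl_of]
      simp
    · refine ⟨t', ?_, hlen'.trans (by simp)⟩
      rw [ht', dec_mul_inr]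

theorem emb_reach (c : List (G × Fin r)) :
    ∀ (u : List (G × Fin r)) (g h : G), ∃ zw : List (Monoid.Coprod (FreeMonoid (Fin r)) G),
      (∀ s ∈ zw, s ∈ genS r G) ∧ emb (u, g) * zw.prod = emb (u ++ c, h) ∧
      zw.length ≤ 2 * c.length + 1 := by
  induction c with
  | nil =>
    intro u g h
    refine ⟨[Coprod.inr (g⁻¹ * h)], ?_, ?_, by simp⟩
    · rintro s hs
      simp only [List.mem_singleton] at hs
      exact Or.inr ⟨g⁻¹ * h, hs.symm⟩
    · rw [List.prod_singleton, emb_mul_inr, mul_inv_cancel_left, List.append_nil]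
  | cons p t ih =>
    intro u g h
    rcases p with ⟨k, a⟩
    obtain ⟨zw', hzw', heq', hlen'⟩ := ih (u ++ [(k, a)]) 1 h
    refine ⟨Coprod.inr (g⁻¹ * k) :: Coprod.inl (FreeMonoid.of a) :: zw', ?_, ?_, ?_⟩
    · rintro s hs
      simp only [List.mem_cons] at hs
      rcases hs with rfl | rfl | hs
      · exact Or.inr ⟨g⁻¹ * k, rfl⟩
      · exact Or.inl ⟨a, rfl⟩
      · exact hzw' s hs
    · rw [List.prod_cons, List.prod_cons, ← mul_assoc, ← mul_assoc,
        emb_mul_inr, mul_inv_cancel_left, emb_mul_inl_of, heq']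
      simp
    · simp only [List.length_cons] at hlen' ⊢
      omega

end Stmt18Aux

theorem stmt_18 (r : ℕ) (G : Type*) [Group G] [Finite G] :
    ∃ (S : Set (Monoid.Coprod (FreeMonoid (Fin r)) G))
      (S' : Set (FreeMonoid (Fin (r * Nat.card G)))),
      S.Finite ∧ Submonoid.closure S = ⊤ ∧ S'.Finite ∧ Submonoid.closure S' = ⊤ ∧
      ∃ (f : Monoid.Coprod (FreeMonoid (Fin r)) G → FreeMonoid (Fin (r * Nat.card G)))
        (lam eps mu : ℝ≥0), 1 ≤ lam ∧ 0 < eps ∧ 1 ≤ mu ∧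
        (∀ x y, wordDist S x y / (lam : ℝ≥0∞) - (eps : ℝ≥0∞) ≤ wordDist S' (f x) (f y) ∧
          wordDist S' (f x) (f y) ≤ (lam : ℝ≥0∞) * wordDist S x y + (eps : ℝ≥0∞)) ∧
        ∀ z, ∃ x, wordDist S' (f x) z ≤ (mu : ℝ≥0∞) ∧ wordDist S' z (f x) ≤ (mu : ℝ≥0∞) := by
  classical
  obtain ⟨e⟩ : Nonempty ((G × Fin r) ≃ Fin (r * Nat.card G)) :=
    ⟨Finite.equivFinOfCardEq (by rw [Nat.card_prod]; simp [Nat.card_eq_fintype_card, mul_comm])⟩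
  set Sset := Stmt18Aux.genS r G with hSset
  set T : Set (FreeMonoid (Fin (r * Nat.card G))) := Set.range FreeMonoid.of with hT
  set f : Monoid.Coprod (FreeMonoid (Fin r)) G → FreeMonoid (Fin (r * Nat.card G)) :=
    fun x => FreeMonoid.ofList (((Stmt18Aux.dec x).1).map e) with hf
  have hupper : ∀ x y, wordDist T (f x) (f y) ≤ wordDist Sset x y := by
    intro x y
    refine le_sInf ?_
    rintro n ⟨w, hw, rfl, rfl⟩
    obtain ⟨t, ht, hlen⟩ := Stmt18Aux.dec_word w hw x
    calc wordDist T (f x) (f (x * w.prod)) ≤ ((t.map e).length : ℝ≥0∞) := by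
          have h := Stmt18Aux.freeDist_le ((Stmt18Aux.dec x).1.map e) (t.map e)
          rw [← List.map_append, ← ht] at h
          exact h
      _ ≤ (w.length : ℝ≥0∞) := by
          rw [List.length_map]; exact_mod_cast Nat.cast_le.mpr hlen
  have hlower : ∀ x y, wordDist Sset x y ≤ 2 * wordDist T (f x) (f y) + 1 := by
    intro x y
    rcases eq_or_ne (wordDist T (f x) (f y)) ⊤ with htop | hne
    · rw [htop]
      simp [ENNReal.mul_top]
    obtain ⟨w, hw, hxy, hlen⟩ := Stmt18Aux.wordDist_attained _ _ _ hne
    set c : List (G × Fin r) := (FreeMonoid.toList w.prod).map e.symm with hc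
    have hdec : (Stmt18Aux.dec y).1 = (Stmt18Aux.dec x).1 ++ c := by
      have h1 : FreeMonoid.toList (f y) =
          FreeMonoid.toList (f x) ++ FreeMonoid.toList w.prod := by
        rw [← hxy, FreeMonoid.toList_mul]
      have h2 : (Stmt18Aux.dec y).1.map e =
          (Stmt18Aux.dec x).1.map e ++ FreeMonoid.toList w.prod := by
        simpa [hf, FreeMonoid.toList_ofList] using h1
      have h3 := congrArg (List.map e.symm) h2
      simpa [List.map_map, Equiv.symm_comp_self, hc] using h3
    have hclen : c.length = w.length := by
      rw [hc, List.length_map, Stmt18Aux.length_prod_of w hw]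
    obtain ⟨zw, hzw, heq, hzlen⟩ := Stmt18Aux.emb_reach c (Stmt18Aux.dec x).1
      (Stmt18Aux.dec x).2 (Stmt18Aux.dec y).2
    have hx : Stmt18Aux.emb ((Stmt18Aux.dec x).1, (Stmt18Aux.dec x).2) = x := by
      simpa using Stmt18Aux.emb_dec x
    have hy : Stmt18Aux.emb ((Stmt18Aux.dec x).1 ++ c, (Stmt18Aux.dec y).2) = y := by
      rw [← hdec]
      simpa using Stmt18Aux.emb_dec y
    rw [hx, hy] at heq
    calc wordDist Sset x y ≤ (zw.length : ℝ≥0∞) := Stmt18Aux.wordDist_le _ zw hzw heq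
      _ ≤ ((2 * c.length + 1 : ℕ) : ℝ≥0∞) := by exact_mod_cast hzlen
      _ = 2 * (w.length : ℝ≥0∞) + 1 := by push_cast [hclen]; ring
      _ = 2 * wordDist T (f x) (f y) + 1 := by rw [hlen]
  refine ⟨Sset, T, Stmt18Aux.genS_finite, Stmt18Aux.genS_closure, Set.finite_range _,
    FreeMonoid.closure_range_of, f, 2, 2, 1, one_le_two, by norm_num, le_rfl, ?_, ?_⟩
  · intro x y
    have hcast2 : (((2 : ℝ≥0)) : ℝ≥0∞) = 2 := by norm_num
    have hcast1 : (((1 : ℝ≥0)) : ℝ≥0∞) = 1 := by norm_num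
    rw [hcast2]
    constructor
    · rw [tsub_le_iff_right, ENNReal.div_le_iff_le_mul (Or.inl two_ne_zero)
        (Or.inl ENNReal.ofNat_ne_top)]
      calc wordDist Sset x y ≤ 2 * wordDist T (f x) (f y) + 1 := hlower x y
        _ ≤ (wordDist T (f x) (f y) + 2) * 2 := by
            rw [mul_comm (wordDist T (f x) (f y) + 2) 2, mul_add]
            exact add_le_add_right (by norm_num) _
    · calc wordDist T (f x) (f y) ≤ wordDist Sset x y := hupper x y
        _ = 1 * wordDist Sset x y := (one_mul _).symm
        _ ≤ 2 * wordDist Sset x y := mul_le_mul_left one_le_two _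
        _ ≤ 2 * wordDist Sset x y + 2 := le_self_add
  · intro z
    refine ⟨Stmt18Aux.emb ((FreeMonoid.toList z).map e.symm, 1), ?_, ?_⟩
    · have hfz : f (Stmt18Aux.emb ((FreeMonoid.toList z).map e.symm, 1)) = z := by
        rw [hf]
        simp only [Stmt18Aux.dec_emb, List.map_map, Equiv.self_comp_symm, List.map_id,
          FreeMonoid.ofList_toList]
      rw [hfz]
      exact le_trans (Stmt18Aux.wordDist_self_le_zero _ _) (by simp)
    · have hfz : f (Stmt18Aux.emb ((FreeMonoid.toList z).map e.symm, 1)) = z := by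
        rw [hf]
        simp only [Stmt18Aux.dec_emb, List.map_map, Equiv.self_comp_symm, List.map_id,
          FreeMonoid.ofList_toList]
      rw [hfz]
      exact le_trans (Stmt18Aux.wordDist_self_le_zero _ _) (by simp)
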